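/- arXiv:1605.01045 — 2 statements merged into one kernel-verified Lean document; each statement's English description precedes it below -/
import Mathlib

section
/- If {f_i} is a frame for H with frame bounds A and B and frame operator S, then the canonical dual {S⁻¹ f_i} is a frame with frame bounds B⁻¹ and A⁻¹. -/
open scoped InnerProductSpace

/-- If `{f i}` is a frame with bounds `A, B` and frame operator `S`, then the canonical
dual `{S⁻¹ f i}` is a frame with bounds `B⁻¹` and `A⁻¹`. -/
theorem canonical_dual_is_frame_with_inverse_bounds
    {H : Type*} [NormedAddCommGroup H] [InnerProductSpace ℂ H] [CompleteSpace H]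
    (f : ℕ → H) (A B : ℝ) (hA : 0 < A) (hAB : A ≤ B)
    (hframe : ∀ x : H,
      A * ‖x‖ ^ 2 ≤ ∑' i, ‖⟪f i, x⟫_ℂ‖ ^ 2 ∧ ∑' i, ‖⟪f i, x⟫_ℂ‖ ^ 2 ≤ B * ‖x‖ ^ 2)
    (S : H ≃L[ℂ] H)
    (hS : ∀ x : H, HasSum (fun i => ⟪f i, x⟫_ℂ • f i) (S x)) :
    ∀ x : H,
      B⁻¹ * ‖x‖ ^ 2 ≤ ∑' i, ‖⟪S.symm (f i), x⟫_ℂ‖ ^ 2 ∧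
        ∑' i, ‖⟪S.symm (f i), x⟫_ℂ‖ ^ 2 ≤ A⁻¹ * ‖x‖ ^ 2 := by
  have hB : (0:ℝ) < B := hA.trans_le hAB
  have hSum : ∀ u v : H, HasSum (fun i => ⟪f i, u⟫_ℂ * ⟪v, f i⟫_ℂ) ⟪v, S u⟫_ℂ := fun u v => by
    simpa [inner_smul_right, mul_comm] using (hS u).mapL (innerSL ℂ v)
  -- self-adjointness
  have hsa : ∀ u v : H, ⟪S u, v⟫_ℂ = ⟪u, S v⟫_ℂ := by
    intro u v
    have h1 := (hSum u v).star
    have h2 := hSum v u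
    have h3 : (fun i => star (⟪f i, u⟫_ℂ * ⟪v, f i⟫_ℂ)) =
        fun i => ⟪f i, v⟫_ℂ * ⟪u, f i⟫_ℂ := by
      funext i
      simp only [star_mul']
      rw [show (star ⟪f i, u⟫_ℂ) = ⟪u, f i⟫_ℂ from inner_conj_symm _ _,
        show (star ⟪v, f i⟫_ℂ) = ⟪f i, v⟫_ℂ from inner_conj_symm _ _]
      ring
    rw [h3] at h1
    have h4 : star ⟪v, S u⟫_ℂ = ⟪u, S v⟫_ℂ := h1.unique h2
    rw [← h4]; exact (inner_conj_symm _ _).symm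
  -- the diagonal sum
  have hre : ∀ u : H, HasSum (fun i => ‖⟪f i, u⟫_ℂ‖ ^ 2) (Complex.re ⟪u, S u⟫_ℂ) := by
    intro u
    have h := (hSum u u).mapL Complex.reCLM
    have h3 : (fun i => Complex.reCLM (⟪f i, u⟫_ℂ * ⟪u, f i⟫_ℂ)) =
        fun i => ‖⟪f i, u⟫_ℂ‖ ^ 2 := by
      funext i
      rw [show ⟪u, f i⟫_ℂ = starRingEnd ℂ ⟪f i, u⟫_ℂ from (inner_conj_symm _ _).symm,
        Complex.mul_conj']
      simp [← Complex.ofReal_pow]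
    rwa [h3] at h
  intro x
  set y := S.symm x with hy
  have hx : S y = x := S.apply_symm_apply x
  have hterm : ∀ i, ⟪S.symm (f i), x⟫_ℂ = ⟪f i, y⟫_ℂ := by
    intro i
    conv_lhs => rw [← hx]
    rw [← hsa (S.symm (f i)) y, S.apply_symm_apply]
  set t := Complex.re ⟪y, x⟫_ℂ with ht
  have hTy : (∑' i, ‖⟪S.symm (f i), x⟫_ℂ‖ ^ 2) = t := by
    simp_rw [hterm]
    rw [(hre y).tsum_eq, hx]
  have hTy' : (∑' i, ‖⟪f i, y⟫_ℂ‖ ^ 2) = t := by rw [(hre y).tsum_eq, hx]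
  rw [hTy]
  obtain ⟨hfy1, hfy2⟩ := hframe y
  obtain ⟨hfx1, hfx2⟩ := hframe x
  rw [hTy'] at hfy1 hfy2
  have ht0 : 0 ≤ t := le_trans (by positivity) hfy1
  have ht_le : t ≤ ‖y‖ * ‖x‖ :=
    (Complex.re_le_norm _).trans (by exact norm_inner_le_norm _ _)
  constructor
  · -- lower bound
    set a : ℕ → ℝ := fun i => ‖⟪f i, y⟫_ℂ‖ with ha
    set b : ℕ → ℝ := fun i => ‖⟪f i, x⟫_ℂ‖ with hb
    have ha2 : Summable (fun i => a i ^ 2) := (hre y).summable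
    have hb2 : Summable (fun i => b i ^ 2) := (hre x).summable
    have hab : Summable (fun i => a i * b i) := by
      apply Summable.of_nonneg_of_le (fun i => by positivity)
        (fun i => ?_) ((ha2.add hb2).div_const 2)
      nlinarith [sq_nonneg (a i - b i)]
    set c := ∑' i, a i * b i with hc
    have hc0 : 0 ≤ c := tsum_nonneg fun i => by positivity
    have hx2 : ‖x‖ ^ 2 ≤ c := by
      have h := (hSum y x).mapL Complex.reCLM
      rw [hx] at h
      have hxx : Complex.reCLM ⟪x, x⟫_ℂ = ‖x‖ ^ 2 := by
        simp [@inner_self_eq_norm_sq_to_K ℂ, ← Complex.ofReal_pow]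
      rw [hxx] at h
      simp only [Complex.reCLM_apply] at h
      refine h.tsum_eq ▸ Summable.tsum_le_tsum (fun i => ?_) h.summable hab
      calc (⟪f i, y⟫_ℂ * ⟪x, f i⟫_ℂ).re
          ≤ ‖⟪f i, y⟫_ℂ * ⟪x, f i⟫_ℂ‖ :=
            Complex.re_le_norm _
        _ = a i * b i := by rw [norm_mul, norm_inner_symm x (f i)]
    have hcs : c ^ 2 ≤ t * (∑' i, b i ^ 2) := by
      have hTx0 : 0 ≤ ∑' i, b i ^ 2 := tsum_nonneg fun i => by positivity
      have hcle : c ≤ Real.sqrt (t * ∑' i, b i ^ 2) := by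
        refine Summable.tsum_le_of_sum_le hab fun s => ?_
        rw [Real.le_sqrt (Finset.sum_nonneg fun i _ => by positivity) (mul_nonneg ht0 hTx0)]
        calc (∑ i ∈ s, a i * b i) ^ 2
            ≤ (∑ i ∈ s, a i ^ 2) * (∑ i ∈ s, b i ^ 2) :=
              Finset.sum_mul_sq_le_sq_mul_sq s a b
          _ ≤ t * (∑' i, b i ^ 2) := by
              apply mul_le_mul
              · rw [← hTy']; exact Summable.sum_le_tsum s (fun i _ => by positivity) ha2
              · exact Summable.sum_le_tsum s (fun i _ => by positivity) hb2
              · exact Finset.sum_nonneg fun i _ => by positivity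
              · exact ht0
      calc c ^ 2 ≤ Real.sqrt (t * ∑' i, b i ^ 2) ^ 2 := by
            apply pow_le_pow_left₀ hc0 hcle
        _ = t * ∑' i, b i ^ 2 := Real.sq_sqrt (mul_nonneg ht0 hTx0)
    rcases eq_or_lt_of_le (norm_nonneg x) with hx0 | hx0
    · simp [← hx0, ht0]
    · have key : ‖x‖ ^ 2 * ‖x‖ ^ 2 ≤ t * (B * ‖x‖ ^ 2) := by
        calc ‖x‖ ^ 2 * ‖x‖ ^ 2 ≤ c * c := mul_le_mul hx2 hx2 (by positivity) hc0
          _ = c ^ 2 := by ring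
          _ ≤ t * (∑' i, b i ^ 2) := hcs
          _ ≤ t * (B * ‖x‖ ^ 2) := mul_le_mul_of_nonneg_left hfx2 ht0
      have h5 : ‖x‖ ^ 2 ≤ t * B := by
        have hx2pos : (0:ℝ) < ‖x‖ ^ 2 := by positivity
        nlinarith
      rw [inv_mul_le_iff₀ hB] at *
      linarith [h5]
  · -- upper bound
    rcases eq_or_lt_of_le (norm_nonneg y) with hy0 | hy0
    · have : t ≤ 0 := by
        calc t ≤ ‖y‖ * ‖x‖ := ht_le
          _ = 0 := by rw [← hy0]; ring
      have : t = 0 := le_antisymm this ht0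
      rw [this]; positivity
    · have h1 : A * ‖y‖ ≤ ‖x‖ := by
        have := hfy1.trans ht_le
        have h2 : A * ‖y‖ * ‖y‖ ≤ ‖x‖ * ‖y‖ := by nlinarith
        exact le_of_mul_le_mul_right h2 hy0
      have h2 : ‖y‖ ≤ A⁻¹ * ‖x‖ := by
        rw [← mul_le_mul_iff_right₀ hA, mul_inv_cancel_left₀ hA.ne']
        linarith
      calc t ≤ ‖y‖ * ‖x‖ := ht_le
        _ ≤ (A⁻¹ * ‖x‖) * ‖x‖ := mul_le_mul_of_nonneg_right h2 (norm_nonneg x)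
        _ = A⁻¹ * ‖x‖ ^ 2 := by ring
end

section
/- Let {(W_i, 1)} be a fusion frame with dual {(V_i, 1)}. If φ* = ψ, where φ({f_i}) = {π_{V_i} S_W⁻¹ f_i} and ψ({g_i}) = {π_{W_i} S_V⁻¹ g_i}, then {(W_i, 1)} is also a dual of {(V_i, 1)}. Conversely, if {W_i} and {V_i} are fusion Riesz bases and each is a dual of the other, then φ* = ψ. -/
open scoped InnerProductSpace

/-- Orthogonal projection onto a complete subspace, as an operator `H →L H`. -/
noncomputable def fusionProj {H : Type*} [NormedAddCommGroup H] [InnerProductSpace ℂ H]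
    (K : Submodule ℂ H) [CompleteSpace K] : H →L[ℂ] H :=
  K.subtypeL.comp (Submodule.orthogonalProjectionOnto K)

/-- `{(W i, 1)}` is a fusion Riesz basis: the span of the `W i` is dense and there are
`0 < C ≤ D` with `C (∑_{j∈J} ‖f j‖²)^{1/2} ≤ ‖∑_{j∈J} f j‖ ≤ D (∑_{j∈J} ‖f j‖²)^{1/2}`
for every finite `J` and `f j ∈ W j`. -/
def IsFusionRieszBasis {H : Type*} [NormedAddCommGroup H] [InnerProductSpace ℂ H]
    {ι : Type*} (W : ι → Submodule ℂ H) : Prop :=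
  (⨆ i, W i).topologicalClosure = ⊤ ∧
  ∃ C D : ℝ, 0 < C ∧ C ≤ D ∧
    ∀ (J : Finset ι) (f : ι → H), (∀ j, f j ∈ W j) →
      C * Real.sqrt (∑ j ∈ J, ‖f j‖ ^ 2) ≤ ‖∑ j ∈ J, f j‖ ∧
        ‖∑ j ∈ J, f j‖ ≤ D * Real.sqrt (∑ j ∈ J, ‖f j‖ ^ 2)


open scoped ComplexConjugate ENNReal NNReal

set_option linter.unusedSectionVars false

section Aux

variable {H : Type*} [NormedAddCommGroup H] [InnerProductSpace ℂ H] [CompleteSpace H]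
variable {ι : Type*}

lemma fusionProj_apply (K : Submodule ℂ H) [CompleteSpace K] (f : H) :
    fusionProj K f = (Submodule.orthogonalProjectionOnto K f : H) := rfl

lemma fusionProj_mem (K : Submodule ℂ H) [CompleteSpace K] (f : H) :
    fusionProj K f ∈ K := (Submodule.orthogonalProjectionOnto K f).2

lemma fusionProj_of_mem {K : Submodule ℂ H} [CompleteSpace K] {f : H} (hf : f ∈ K) :
    fusionProj K f = f := by
  simp [fusionProj_apply, Submodule.starProjection_eq_self_iff.mpr hf]

lemma inner_fusionProj_left_eq_right (K : Submodule ℂ H) [CompleteSpace K] (u v : H) :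
    ⟪fusionProj K u, v⟫_ℂ = ⟪u, fusionProj K v⟫_ℂ := by
  simpa [fusionProj_apply] using Submodule.inner_starProjection_left_eq_right K u v

/-- Square-summability of projection norms, from the frame bounds. -/
lemma summable_sq_of_frame (V : ι → Submodule ℂ H) [∀ i, CompleteSpace (V i)]
    {A B : ℝ} (hA : 0 < A)
    (hframe : ∀ f : H,
      A * ‖f‖ ^ 2 ≤ ∑' i, ‖fusionProj (V i) f‖ ^ 2 ∧
        ∑' i, ‖fusionProj (V i) f‖ ^ 2 ≤ B * ‖f‖ ^ 2) (f : H) :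
    Summable (fun i => ‖fusionProj (V i) f‖ ^ 2) := by
  by_contra h
  have h0 := tsum_eq_zero_of_not_summable h
  have h1 := (hframe f).1
  rw [h0] at h1
  have hf : f = 0 := by
    by_contra hf
    have : 0 < ‖f‖ := norm_pos_iff.mpr hf
    nlinarith [pow_pos this 2, mul_pos hA (pow_pos this 2)]
  apply h
  subst hf
  simpa using summable_zero

end Aux

section Aux2

variable {H : Type*} [NormedAddCommGroup H] [InnerProductSpace ℂ H] [CompleteSpace H]
variable {ι : Type*}

set_option linter.unusedSectionVars false

/-- Bessel-type bound for the synthesis operator, on finite sets. -/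
lemma synthesis_sq_bound (W : ι → Submodule ℂ H) [∀ i, CompleteSpace (W i)]
    {B : ℝ} (hB : 0 ≤ B)
    (hupper : ∀ f : H, ∑' i, ‖fusionProj (W i) f‖ ^ 2 ≤ B * ‖f‖ ^ 2)
    (hsummable : ∀ f : H, Summable (fun i => ‖fusionProj (W i) f‖ ^ 2))
    (J : Finset ι) (x : ι → H) (hx : ∀ j, x j ∈ W j) :
    ‖∑ j ∈ J, x j‖ ^ 2 ≤ B * ∑ j ∈ J, ‖x j‖ ^ 2 := by
  set s := ∑ j ∈ J, x j with hs
  have key : ‖s‖ ^ 2 = ∑ j ∈ J, (RCLike.re (⟪x j, s⟫_ℂ)) := by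
    rw [← @inner_self_eq_norm_sq ℂ, hs, sum_inner]
    rw [map_sum]
  have hterm : ∀ j ∈ J, RCLike.re (⟪x j, s⟫_ℂ) ≤ ‖x j‖ * ‖fusionProj (W j) s‖ := by
    intro j _
    have : ⟪x j, s⟫_ℂ = ⟪x j, fusionProj (W j) s⟫_ℂ := by
      rw [← inner_fusionProj_left_eq_right, fusionProj_of_mem (hx j)]
    rw [this]
    calc RCLike.re (⟪x j, fusionProj (W j) s⟫_ℂ) ≤ ‖⟪x j, fusionProj (W j) s⟫_ℂ‖ :=
          RCLike.re_le_norm _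
      _ ≤ ‖x j‖ * ‖fusionProj (W j) s‖ := norm_inner_le_norm _ _
  have h1 : ‖s‖ ^ 2 ≤ ∑ j ∈ J, ‖x j‖ * ‖fusionProj (W j) s‖ := by
    rw [key]; exact Finset.sum_le_sum hterm
  have hCS : (∑ j ∈ J, ‖x j‖ * ‖fusionProj (W j) s‖) ^ 2 ≤
      (∑ j ∈ J, ‖x j‖ ^ 2) * ∑ j ∈ J, ‖fusionProj (W j) s‖ ^ 2 :=
    Finset.sum_mul_sq_le_sq_mul_sq J _ _
  have hproj : ∑ j ∈ J, ‖fusionProj (W j) s‖ ^ 2 ≤ B * ‖s‖ ^ 2 :=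
    le_trans (Summable.sum_le_tsum J (fun i _ => sq_nonneg _) (hsummable s)) (hupper s)
  have h2 : (‖s‖ ^ 2) ^ 2 ≤ (∑ j ∈ J, ‖x j‖ ^ 2) * (B * ‖s‖ ^ 2) := by
    calc (‖s‖ ^ 2) ^ 2 ≤ (∑ j ∈ J, ‖x j‖ * ‖fusionProj (W j) s‖) ^ 2 := by
          apply pow_le_pow_left₀ (sq_nonneg _) h1
      _ ≤ (∑ j ∈ J, ‖x j‖ ^ 2) * ∑ j ∈ J, ‖fusionProj (W j) s‖ ^ 2 := hCS
      _ ≤ (∑ j ∈ J, ‖x j‖ ^ 2) * (B * ‖s‖ ^ 2) := by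
          apply mul_le_mul_of_nonneg_left hproj
          exact Finset.sum_nonneg fun j _ => sq_nonneg _
  rcases eq_or_ne s 0 with h | h
  · rw [h]
    simp only [norm_zero]
    have hnn : 0 ≤ ∑ j ∈ J, ‖x j‖ ^ 2 := Finset.sum_nonneg fun j _ => sq_nonneg _
    nlinarith
  · have hpos : 0 < ‖s‖ ^ 2 := pow_pos (norm_pos_iff.mpr h) 2
    nlinarith [hpos]

/-- Summability of a sequence of vectors in the subspaces with square-summable norms,
in the presence of an upper (Bessel) frame bound. -/
lemma summable_of_sq_summable (W : ι → Submodule ℂ H) [∀ i, CompleteSpace (W i)]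
    {B : ℝ} (hB : 0 < B)
    (hupper : ∀ f : H, ∑' i, ‖fusionProj (W i) f‖ ^ 2 ≤ B * ‖f‖ ^ 2)
    (hsummable : ∀ f : H, Summable (fun i => ‖fusionProj (W i) f‖ ^ 2))
    (c : ι → H) (hcmem : ∀ i, c i ∈ W i) (hcsq : Summable fun i => ‖c i‖ ^ 2) :
    Summable c := by
  rw [summable_iff_vanishing_norm]
  intro ε hε
  have hε2 : 0 < ε ^ 2 / B := by positivity
  obtain ⟨s, hs⟩ := summable_iff_vanishing_norm.mp hcsq (ε ^ 2 / B) hε2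
  refine ⟨s, fun t ht => ?_⟩
  have hb := synthesis_sq_bound W hB.le hupper hsummable t c hcmem
  have htail : ∑ i ∈ t, ‖c i‖ ^ 2 < ε ^ 2 / B := by
    have := hs t ht
    calc ∑ i ∈ t, ‖c i‖ ^ 2 ≤ ‖∑ i ∈ t, ‖c i‖ ^ 2‖ := le_abs_self _
      _ < ε ^ 2 / B := this
  have h2 : ‖∑ i ∈ t, c i‖ ^ 2 < ε ^ 2 := by
    calc ‖∑ i ∈ t, c i‖ ^ 2 ≤ B * ∑ i ∈ t, ‖c i‖ ^ 2 := hb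
      _ < B * (ε ^ 2 / B) := by exact (mul_lt_mul_iff_right₀ hB).mpr htail
      _ = ε ^ 2 := by field_simp
  nlinarith [norm_nonneg (∑ i ∈ t, c i)]

end Aux2

section Aux3

variable {H : Type*} [NormedAddCommGroup H] [InnerProductSpace ℂ H] [CompleteSpace H]
variable {ι : Type*}

set_option linter.unusedSectionVars false

/-- Uniqueness of decompositions along a fusion Riesz basis. -/
lemma riesz_unique (V : ι → Submodule ℂ H) (hV : IsFusionRieszBasis V)
    (e : ι → H) (he : ∀ i, e i ∈ V i) (h0 : HasSum e 0) : ∀ i, e i = 0 := by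
  classical
  obtain ⟨-, C, D, hC, hCD, hbd⟩ := hV
  intro i
  by_contra hne
  have hpos : 0 < ‖e i‖ := norm_pos_iff.mpr hne
  have hε : 0 < C * ‖e i‖ := mul_pos hC hpos
  have := Metric.tendsto_nhds.mp h0 (C * ‖e i‖) hε
  rw [SummationFilter.unconditional_filter, Filter.eventually_atTop] at this
  obtain ⟨J₀, hJ₀⟩ := this
  set J : Finset ι := insert i J₀ with hJ
  have hJle : J₀ ≤ J := Finset.subset_insert i J₀
  have hlt : dist (∑ j ∈ J, e j) 0 < C * ‖e i‖ := hJ₀ J hJle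
  rw [dist_zero_right] at hlt
  have hlow := (hbd J e he).1
  have hsingle : ‖e i‖ ^ 2 ≤ ∑ j ∈ J, ‖e j‖ ^ 2 :=
    Finset.single_le_sum (fun j _ => sq_nonneg ‖e j‖) (Finset.mem_insert_self i J₀)
  have hsqrt : ‖e i‖ ≤ Real.sqrt (∑ j ∈ J, ‖e j‖ ^ 2) := by
    rw [show ‖e i‖ = Real.sqrt (‖e i‖ ^ 2) from (Real.sqrt_sq (norm_nonneg _)).symm]
    exact Real.sqrt_le_sqrt hsingle
  have : C * ‖e i‖ ≤ ‖∑ j ∈ J, e j‖ :=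
    le_trans (by nlinarith) hlow
  linarith

/-- `⟪S x, y⟫ = ⟪x, S y⟫` for a fusion frame operator. -/
lemma frameOp_selfAdjoint (V : ι → Submodule ℂ H) [∀ i, CompleteSpace (V i)]
    (SV : H ≃L[ℂ] H)
    (hSV : ∀ f : H, HasSum (fun i => fusionProj (V i) f) (SV f)) (x y : H) :
    ⟪SV x, y⟫_ℂ = ⟪x, SV y⟫_ℂ := by
  have h1 : HasSum (fun i => ⟪x, fusionProj (V i) y⟫_ℂ) ⟪x, SV y⟫_ℂ := by
    simpa using (hSV y).mapL (innerSL ℂ x)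
  have h2 : HasSum (fun i => ⟪y, fusionProj (V i) x⟫_ℂ) ⟪y, SV x⟫_ℂ := by
    simpa using (hSV x).mapL (innerSL ℂ y)
  have h3 : HasSum (fun i => starRingEnd ℂ ⟪y, fusionProj (V i) x⟫_ℂ)
      (starRingEnd ℂ ⟪y, SV x⟫_ℂ) := h2.star
  simp only [inner_conj_symm] at h3
  have h4 : HasSum (fun i => ⟪x, fusionProj (V i) y⟫_ℂ) ⟪SV x, y⟫_ℂ := by
    convert h3 using 2 with i
    rw [inner_fusionProj_left_eq_right]
  exact (h4.unique h1).symm ▸ (h4.unique h1) ▸ rfl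

end Aux3

section Aux4

variable {H : Type*} [NormedAddCommGroup H] [InnerProductSpace ℂ H] [CompleteSpace H]
variable {ι : Type*}

set_option linter.unusedSectionVars false

lemma proj_dual_eq (W V : ι → Submodule ℂ H) [∀ i, CompleteSpace (W i)]
    [∀ i, CompleteSpace (V i)] (hVR : IsFusionRieszBasis V)
    (SW SV : H ≃L[ℂ] H)
    (hSV : ∀ f : H, HasSum (fun i => fusionProj (V i) f) (SV f))
    (hdual : ∀ f : H, HasSum (fun i => fusionProj (V i) (SW.symm (fusionProj (W i) f))) f)
    (f : H) (i : ι) :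
    fusionProj (V i) (SW.symm (fusionProj (W i) f)) = fusionProj (V i) (SV.symm f) := by
  have hc := hdual f
  have hd : HasSum (fun i => fusionProj (V i) (SV.symm f)) f := by
    simpa using hSV (SV.symm f)
  have h0 : HasSum (fun j => fusionProj (V j) (SW.symm (fusionProj (W j) f)) -
      fusionProj (V j) (SV.symm f)) 0 := by
    simpa using hc.sub hd
  have := riesz_unique V hVR _
    (fun j => Submodule.sub_mem _ (fusionProj_mem _ _) (fusionProj_mem _ _)) h0 i
  exact sub_eq_zero.mp this

lemma key_inner (W V : ι → Submodule ℂ H) [∀ i, CompleteSpace (W i)]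
    [∀ i, CompleteSpace (V i)] (hVR : IsFusionRieszBasis V)
    (SW SV : H ≃L[ℂ] H)
    (hSV : ∀ f : H, HasSum (fun i => fusionProj (V i) f) (SV f))
    (hdual : ∀ f : H, HasSum (fun i => fusionProj (V i) (SW.symm (fusionProj (W i) f))) f)
    {i : ι} {a b : H} (ha : a ∈ V i) (hb : b ∈ W i) :
    ⟪a, SW.symm b⟫_ℂ = ⟪SV.symm a, b⟫_ℂ := by
  have hsa := frameOp_selfAdjoint V SV hSV
  have hsymm_sa : ∀ x y : H, ⟪SV.symm x, y⟫_ℂ = ⟪x, SV.symm y⟫_ℂ := by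
    intro x y
    calc ⟪SV.symm x, y⟫_ℂ = ⟪SV.symm x, SV (SV.symm y)⟫_ℂ := by rw [SV.apply_symm_apply]
      _ = ⟪SV (SV.symm x), SV.symm y⟫_ℂ := (hsa _ _).symm
      _ = ⟪x, SV.symm y⟫_ℂ := by rw [SV.apply_symm_apply]
  calc ⟪a, SW.symm b⟫_ℂ = ⟪fusionProj (V i) a, SW.symm b⟫_ℂ := by rw [fusionProj_of_mem ha]
    _ = ⟪a, fusionProj (V i) (SW.symm b)⟫_ℂ := inner_fusionProj_left_eq_right _ _ _
    _ = ⟪a, fusionProj (V i) (SW.symm (fusionProj (W i) b))⟫_ℂ := by rw [fusionProj_of_mem hb]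
    _ = ⟪a, fusionProj (V i) (SV.symm b)⟫_ℂ := by rw [proj_dual_eq W V hVR SW SV hSV hdual]
    _ = ⟪fusionProj (V i) a, SV.symm b⟫_ℂ := (inner_fusionProj_left_eq_right _ _ _).symm
    _ = ⟪a, SV.symm b⟫_ℂ := by rw [fusionProj_of_mem ha]
    _ = ⟪SV.symm a, b⟫_ℂ := (hsymm_sa a b).symm

end Aux4

section Aux5

variable {H : Type*} [NormedAddCommGroup H] [InnerProductSpace ℂ H] [CompleteSpace H]
variable {ι : Type*}

set_option linter.unusedSectionVars false

noncomputable def analysisEl (V : ι → Submodule ℂ H) [∀ i, CompleteSpace (V i)] (f : H)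
    (hs : Summable fun i => ‖fusionProj (V i) f‖ ^ 2) : lp (fun i => ↥(V i)) 2 :=
  ⟨fun i => Submodule.orthogonalProjectionOnto (V i) f, by
    apply memℓp_gen
    have heq : (fun i => ‖(Submodule.orthogonalProjectionOnto (V i) f : ↥(V i))‖ ^ (2:ℝ≥0∞).toReal) =
        fun i => ‖fusionProj (V i) f‖ ^ 2 := by
      funext i
      rw [ENNReal.toReal_ofNat, Real.rpow_two]
      congr 1
    rw [heq]
    exact hs⟩

@[simp] lemma analysisEl_apply (V : ι → Submodule ℂ H) [∀ i, CompleteSpace (V i)] (f : H)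
    (hs : Summable fun i => ‖fusionProj (V i) f‖ ^ 2) (i : ι) :
    (analysisEl V f hs) i = Submodule.orthogonalProjectionOnto (V i) f := rfl

end Aux5

section Aux6

variable {H : Type*} [NormedAddCommGroup H] [InnerProductSpace ℂ H] [CompleteSpace H]
variable {ι : Type*}

set_option linter.unusedSectionVars false

lemma fusionProj_norm_le (K : Submodule ℂ H) [CompleteSpace K] (x : H) :
    ‖fusionProj K x‖ ≤ ‖x‖ := by
  have h1 : ‖fusionProj K x‖ = ‖Submodule.orthogonalProjectionOnto K x‖ := rfl
  rw [h1]
  calc ‖Submodule.orthogonalProjectionOnto K x‖ ≤ ‖(Submodule.orthogonalProjectionOnto K : H →L[ℂ] K)‖ * ‖x‖ :=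
        (Submodule.orthogonalProjectionOnto K).le_opNorm x
    _ ≤ 1 * ‖x‖ := by
        apply mul_le_mul_of_nonneg_right (Submodule.orthogonalProjectionOnto_norm_le K) (norm_nonneg x)
    _ = ‖x‖ := one_mul _

set_option maxHeartbeats 1000000 in
set_option synthInstance.maxHeartbeats 400000 in
lemma part_one (W V : ι → Submodule ℂ H) [∀ i, CompleteSpace (W i)]
    [∀ i, CompleteSpace (V i)]
    {A B A' B' : ℝ} (hA : 0 < A) (hAB : A ≤ B) (hA' : 0 < A') (hAB' : A' ≤ B')
    (hWframe : ∀ f : H,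
      A * ‖f‖ ^ 2 ≤ ∑' i, ‖fusionProj (W i) f‖ ^ 2 ∧
        ∑' i, ‖fusionProj (W i) f‖ ^ 2 ≤ B * ‖f‖ ^ 2)
    (hVframe : ∀ f : H,
      A' * ‖f‖ ^ 2 ≤ ∑' i, ‖fusionProj (V i) f‖ ^ 2 ∧
        ∑' i, ‖fusionProj (V i) f‖ ^ 2 ≤ B' * ‖f‖ ^ 2)
    (SW SV : H ≃L[ℂ] H)
    (hSW : ∀ f : H, HasSum (fun i => fusionProj (W i) f) (SW f))
    (hSV : ∀ f : H, HasSum (fun i => fusionProj (V i) f) (SV f))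
    (hdual : ∀ f : H, HasSum (fun i => fusionProj (V i) (SW.symm (fusionProj (W i) f))) f)
    (φ : lp (fun i => ↥(W i)) 2 →L[ℂ] lp (fun i => ↥(V i)) 2)
    (hφ : ∀ (v : lp (fun i => ↥(W i)) 2) (i : ι),
      φ v i = Submodule.orthogonalProjectionOnto (V i) (SW.symm (v i : H)))
    (ψ : lp (fun i => ↥(V i)) 2 →L[ℂ] lp (fun i => ↥(W i)) 2)
    (hψ : ∀ (g : lp (fun i => ↥(V i)) 2) (i : ι),
      ψ g i = Submodule.orthogonalProjectionOnto (W i) (SV.symm (g i : H)))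
    (hAdj : ContinuousLinearMap.adjoint φ = ψ) (f : H) :
    HasSum (fun i => fusionProj (W i) (SV.symm (fusionProj (V i) f))) f := by
  have hWsum : ∀ g : H, Summable fun i => ‖fusionProj (W i) g‖ ^ 2 :=
    summable_sq_of_frame W hA hWframe
  have hVsum : ∀ g : H, Summable fun i => ‖fusionProj (V i) g‖ ^ 2 :=
    summable_sq_of_frame V hA' hVframe
  set c : ι → H := fun i => fusionProj (W i) (SV.symm (fusionProj (V i) f)) with hc
  have hcmem : ∀ i, c i ∈ W i := fun i => fusionProj_mem _ _
  have hcsq : Summable fun i => ‖c i‖ ^ 2 := by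
    set M : ℝ := ‖(SV.symm : H →L[ℂ] H)‖ with hM
    refine Summable.of_nonneg_of_le (fun i => sq_nonneg _) (fun i => ?_)
      ((hVsum f).mul_left (M ^ 2))
    · 
      have h1 : ‖c i‖ ≤ M * ‖fusionProj (V i) f‖ := by
        calc ‖c i‖ ≤ ‖SV.symm (fusionProj (V i) f)‖ := fusionProj_norm_le _ _
          _ ≤ M * ‖fusionProj (V i) f‖ := (SV.symm : H →L[ℂ] H).le_opNorm _
      calc ‖c i‖ ^ 2 ≤ (M * ‖fusionProj (V i) f‖) ^ 2 :=
            pow_le_pow_left₀ (norm_nonneg _) h1 2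
        _ = M ^ 2 * ‖fusionProj (V i) f‖ ^ 2 := by ring
  have hcsum : Summable c :=
    summable_of_sq_summable W (lt_of_lt_of_le hA hAB) (fun g => (hWframe g).2) hWsum
      c hcmem hcsq
  obtain ⟨s, hcs⟩ := hcsum
  suffices hsf : s = f by rwa [hsf] at hcs
  apply ext_inner_right ℂ
  intro h
  set g : lp (fun i => ↥(V i)) 2 := analysisEl V f (hVsum f) with hg
  set v : lp (fun i => ↥(W i)) 2 := analysisEl W h (hWsum h) with hv
  have hAdjInner : ⟪ψ g, v⟫_ℂ = ⟪g, φ v⟫_ℂ := by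
    rw [← hAdj]
    exact ContinuousLinearMap.adjoint_inner_left φ v g
  -- the left-hand side sums to ⟪s, h⟫
  have hsh : HasSum (fun i => ⟪c i, h⟫_ℂ) ⟪s, h⟫_ℂ := by
    have h1 : HasSum (fun i => ⟪h, c i⟫_ℂ) ⟪h, s⟫_ℂ := by
      simpa using hcs.mapL (innerSL ℂ h)
    have h2 := h1.star
    simpa [Complex.star_def, inner_conj_symm] using h2
  have hL : HasSum (fun i => ⟪c i, h⟫_ℂ) ⟪ψ g, v⟫_ℂ := by
    have h0 := lp.hasSum_inner (𝕜 := ℂ) (ψ g) v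
    convert h0 using 2 with i
    · rfl
    rw [Submodule.coe_inner, hψ g i]
    have hgc : ((g i : ↥(V i)) : H) = fusionProj (V i) f := rfl
    have hvc : ((v i : ↥(W i)) : H) = fusionProj (W i) h := rfl
    rw [hgc]
    have e1 : ((Submodule.orthogonalProjectionOnto (W i) (SV.symm (fusionProj (V i) f)) : ↥(W i)) : H)
        = c i := rfl
    rw [e1, hvc]
    calc ⟪c i, h⟫_ℂ = ⟪fusionProj (W i) (c i), h⟫_ℂ := by rw [fusionProj_of_mem (hcmem i)]
      _ = ⟪c i, fusionProj (W i) h⟫_ℂ := inner_fusionProj_left_eq_right _ _ _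
  have hR : HasSum (fun i => ⟪g i, φ v i⟫_ℂ) ⟪f, h⟫_ℂ := by
    have h0 : HasSum (fun i => ⟪f, fusionProj (V i) (SW.symm (fusionProj (W i) h))⟫_ℂ)
        ⟪f, h⟫_ℂ := by
      simpa using (hdual h).mapL (innerSL ℂ f)
    convert h0 using 2 with i
    rw [Submodule.coe_inner, hφ v i]
    have hgc : ((g i : ↥(V i)) : H) = fusionProj (V i) f := rfl
    have hvc : ((v i : ↥(W i)) : H) = fusionProj (W i) h := rfl
    rw [hgc, hvc]
    have e1 : ((Submodule.orthogonalProjectionOnto (V i) (SW.symm (fusionProj (W i) h)) : ↥(V i)) : H)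
        = fusionProj (V i) (SW.symm (fusionProj (W i) h)) := rfl
    rw [e1]
    set d := fusionProj (V i) (SW.symm (fusionProj (W i) h)) with hd
    calc ⟪fusionProj (V i) f, d⟫_ℂ = ⟪f, fusionProj (V i) d⟫_ℂ :=
          inner_fusionProj_left_eq_right _ _ _
      _ = ⟪f, d⟫_ℂ := by rw [fusionProj_of_mem (fusionProj_mem _ _)]
  have hgφ : ⟪g, φ v⟫_ℂ = ⟪f, h⟫_ℂ := (lp.hasSum_inner (𝕜 := ℂ) g (φ v)).unique hR
  calc ⟪s, h⟫_ℂ = ⟪ψ g, v⟫_ℂ := hsh.unique hL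
    _ = ⟪g, φ v⟫_ℂ := hAdjInner
    _ = ⟪f, h⟫_ℂ := hgφ

end Aux6

section Aux7

variable {H : Type*} [NormedAddCommGroup H] [InnerProductSpace ℂ H] [CompleteSpace H]
variable {ι : Type*}

set_option linter.unusedSectionVars false
set_option linter.unusedVariables false

set_option maxHeartbeats 1000000 in
set_option synthInstance.maxHeartbeats 400000 in
lemma part_two (W V : ι → Submodule ℂ H) [∀ i, CompleteSpace (W i)]
    [∀ i, CompleteSpace (V i)]
    (SW SV : H ≃L[ℂ] H)
    (hSV : ∀ f : H, HasSum (fun i => fusionProj (V i) f) (SV f))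
    (hdual : ∀ f : H, HasSum (fun i => fusionProj (V i) (SW.symm (fusionProj (W i) f))) f)
    (φ : lp (fun i => ↥(W i)) 2 →L[ℂ] lp (fun i => ↥(V i)) 2)
    (hφ : ∀ (v : lp (fun i => ↥(W i)) 2) (i : ι),
      φ v i = Submodule.orthogonalProjectionOnto (V i) (SW.symm (v i : H)))
    (ψ : lp (fun i => ↥(V i)) 2 →L[ℂ] lp (fun i => ↥(W i)) 2)
    (hψ : ∀ (g : lp (fun i => ↥(V i)) 2) (i : ι),
      ψ g i = Submodule.orthogonalProjectionOnto (W i) (SV.symm (g i : H)))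
    (hVR : IsFusionRieszBasis V) :
    ContinuousLinearMap.adjoint φ = ψ := by
  apply ContinuousLinearMap.ext
  intro g
  apply ext_inner_right ℂ
  intro v
  rw [ContinuousLinearMap.adjoint_inner_left φ v g]
  rw [lp.inner_eq_tsum, lp.inner_eq_tsum]
  apply tsum_congr
  intro i
  have h1 : ⟪g i, φ v i⟫_ℂ = ⟪(g i : H), SW.symm (v i : H)⟫_ℂ := by
    rw [hφ v i]
    exact Submodule.inner_orthogonalProjectionOnto_eq_of_mem_left (K := V i) (g i) (SW.symm (v i : H))
  have h2 : ⟪ψ g i, v i⟫_ℂ = ⟪SV.symm (g i : H), (v i : H)⟫_ℂ := by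
    rw [hψ g i]
    exact Submodule.inner_orthogonalProjectionOnto_eq_of_mem_right (K := W i) (v i) (SV.symm (g i : H))
  rw [h1, h2]
  exact key_inner W V hVR SW SV hSV hdual (g i).2 (v i).2

end Aux7


set_option maxHeartbeats 1000000 in
set_option synthInstance.maxHeartbeats 400000 in
/-- Let `{(W i, 1)}` be a fusion frame with dual `{(V i, 1)}`. If `φ* = ψ`, where
`φ {f i} = {π_{V i} S_W⁻¹ f i}` and `ψ {g i} = {π_{W i} S_V⁻¹ g i}`, then `{(W i, 1)}`
is also a dual of `{(V i, 1)}`. Conversely, if `{W i}` and `{V i}` are fusion Riesz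
bases and each is a dual of the other, then `φ* = ψ`. -/
theorem fusion_mutual_duality_via_phi_psi
    {H : Type*} [NormedAddCommGroup H] [InnerProductSpace ℂ H] [CompleteSpace H]
    {ι : Type*} (W V : ι → Submodule ℂ H) [∀ i, CompleteSpace (W i)]
    [∀ i, CompleteSpace (V i)]
    (A B A' B' : ℝ) (hA : 0 < A) (hAB : A ≤ B) (hA' : 0 < A') (hAB' : A' ≤ B')
    (hWframe : ∀ f : H,
      A * ‖f‖ ^ 2 ≤ ∑' i, ‖fusionProj (W i) f‖ ^ 2 ∧
        ∑' i, ‖fusionProj (W i) f‖ ^ 2 ≤ B * ‖f‖ ^ 2)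
    (hVframe : ∀ f : H,
      A' * ‖f‖ ^ 2 ≤ ∑' i, ‖fusionProj (V i) f‖ ^ 2 ∧
        ∑' i, ‖fusionProj (V i) f‖ ^ 2 ≤ B' * ‖f‖ ^ 2)
    (SW SV : H ≃L[ℂ] H)
    (hSW : ∀ f : H, HasSum (fun i => fusionProj (W i) f) (SW f))
    (hSV : ∀ f : H, HasSum (fun i => fusionProj (V i) f) (SV f))
    (hdual : ∀ f : H, HasSum (fun i => fusionProj (V i) (SW.symm (fusionProj (W i) f))) f)
    (φ : lp (fun i => ↥(W i)) 2 →L[ℂ] lp (fun i => ↥(V i)) 2)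
    (hφ : ∀ (v : lp (fun i => ↥(W i)) 2) (i : ι),
      φ v i = Submodule.orthogonalProjectionOnto (V i) (SW.symm (v i : H)))
    (ψ : lp (fun i => ↥(V i)) 2 →L[ℂ] lp (fun i => ↥(W i)) 2)
    (hψ : ∀ (g : lp (fun i => ↥(V i)) 2) (i : ι),
      ψ g i = Submodule.orthogonalProjectionOnto (W i) (SV.symm (g i : H))) :
    (ContinuousLinearMap.adjoint φ = ψ →
      ∀ f : H, HasSum (fun i => fusionProj (W i) (SV.symm (fusionProj (V i) f))) f) ∧
    (IsFusionRieszBasis W → IsFusionRieszBasis V →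
      (∀ f : H, HasSum (fun i => fusionProj (W i) (SV.symm (fusionProj (V i) f))) f) →
      ContinuousLinearMap.adjoint φ = ψ) := by
  constructor
  · intro hAdj f
    exact part_one W V hA hAB hA' hAB' hWframe hVframe SW SV hSW hSV hdual φ hφ ψ hψ hAdj f
  · intro hWR hVR hdual2
    exact part_two W V SW SV hSV hdual φ hφ ψ hψ hVR
end
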